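/- In a propelinear code (C, ·), a codeword x belongs to the kernel K(C) if and only if π_x ∈ Aut(C), i.e. π_x(C) = C. -/

import Mathlib

/-- The action of a coordinate permutation `σ` on a binary vector:
`(permAct σ v) i = v (σ⁻¹ i)`. -/
def permAct {m : ℕ} (σ : Equiv.Perm (Fin m)) (v : Fin m → ZMod 2) : Fin m → ZMod 2 :=
  fun i => v (σ.symm i)

/-- The propelinear operation `x · y = x + π_x(y)`. -/
def pmul {m : ℕ} (π : (Fin m → ZMod 2) → Equiv.Perm (Fin m))
    (x y : Fin m → ZMod 2) : Fin m → ZMod 2 :=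
  x + permAct (π x) y

/-- Powers with respect to the propelinear operation. -/
def ppow {m : ℕ} (π : (Fin m → ZMod 2) → Equiv.Perm (Fin m))
    (g : Fin m → ZMod 2) : ℕ → Fin m → ZMod 2
  | 0 => 0
  | k + 1 => pmul π g (ppow π g k)

/-- The all-ones vector. -/
def allOnes (m : ℕ) : Fin m → ZMod 2 := fun _ => 1

lemma img_eq_of_subset {α : Type*} [Finite α] (f : α → α) (hf : Function.Injective f)
    (C : Set α) (h : f '' C ⊆ C) : f '' C = C := by
  have hC : C.Finite := Set.toFinite C
  have hmaps : Set.MapsTo f C C := Set.mapsTo_iff_image_subset.mpr h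
  have hbij : Set.BijOn f C C :=
    (hC.injOn_iff_bijOn_of_mapsTo hmaps).mp (hf.injOn)
  exact hbij.image_eq

lemma permAct_injective {m : ℕ} (σ : Equiv.Perm (Fin m)) :
    Function.Injective (permAct σ) := by
  intro v w h
  funext j
  have := congrFun h (σ j)
  simpa [permAct] using this

/-- In a propelinear code `(C, ·)`, a codeword `x` belongs to the kernel
`K(C) = {z : C + z = C}` if and only if `π_x` is an automorphism of `C`,
i.e. `π_x(C) = C`. -/
theorem stmt_11 {m : ℕ} (C : Set (Fin m → ZMod 2)) (h0 : (0 : Fin m → ZMod 2) ∈ C)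
    (π : (Fin m → ZMod 2) → Equiv.Perm (Fin m))
    (hclosed : ∀ x ∈ C, ∀ y ∈ C, pmul π x y ∈ C)
    (hhom : ∀ x ∈ C, ∀ y ∈ C, π (pmul π x y) = π x * π y)
    (x : Fin m → ZMod 2) (hx : x ∈ C) :
    ((fun v => v + x) '' C = C) ↔ (permAct (π x) '' C = C) := by
  constructor
  · intro h
    apply img_eq_of_subset _ (permAct_injective (π x))
    rintro _ ⟨y, hy, rfl⟩
    have h1 : pmul π x y ∈ C := hclosed x hx y hy
    have h2 : permAct (π x) y = pmul π x y + x := by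
      funext i
      simp [pmul]
      ring_nf
      simp [show (2:ZMod 2) = 0 from rfl]
    rw [h2, ← h]
    exact ⟨pmul π x y, h1, rfl⟩
  · intro h
    apply img_eq_of_subset _ (fun a b hab => by simpa using congrArg (fun v => v + x) hab)
    rintro _ ⟨y, hy, rfl⟩
    rw [← h] at hy
    obtain ⟨z, hz, rfl⟩ := hy
    have : permAct (π x) z + x = pmul π x z := by
      funext i; simp [pmul]; ring_nf
    show permAct (π x) z + x ∈ C
    rw [this]
    exact hclosed x hx z hz
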